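/- arXiv:2105.04304 — 3 statements merged into one kernel-verified Lean document; each statement's English description precedes it below -/
import Mathlib

section
/- Let G ∈ ℂ^{M×M} be a Hermitian matrix with positive real diagonal entries normalized so that ∑_i G_{ii} = 1, and let μ := max_{i≠j} |G_{ij}| / √(G_{ii} G_{jj}) (assume M ≥ 2). If G_{ii} > μ for every i = 1,...,M, then G is strictly diagonally dominant: for every i, ∑_{j≠i} |G_{ij}| < G_{ii}. -/
open Finset

/-- If `G` is a Hermitian matrix with positive real diagonal entries normalized to
trace one, and the mutual coherence `μ = max_{i≠j} |G i j| / √(G i i · G j j)` satisfies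
`μ < G i i` for every `i`, then `G` is strictly diagonally dominant. -/
theorem coherence_implies_diagonal_dominance {M : ℕ} (hM : 2 ≤ M)
    (G : Matrix (Fin M) (Fin M) ℂ) (hherm : G.IsHermitian)
    (hpos : ∀ i, 0 < (G i i).re)
    (htrace : ∑ i, (G i i).re = 1)
    (μ : ℝ)
    (hμ : IsGreatest {r : ℝ | ∃ i j : Fin M, i ≠ j ∧
      r = ‖G i j‖ / Real.sqrt ((G i i).re * (G j j).re)} μ)
    (hdom : ∀ i, μ < (G i i).re) :
    ∀ i, ∑ j ∈ Finset.univ.erase i, ‖G i j‖ < (G i i).re := by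
  intro i
  have := Fin.nontrivial_iff_two_le.mpr hM
  obtain ⟨k, hk⟩ := exists_ne i
  have hμ0 : 0 ≤ μ := by
    refine le_trans ?_ (hμ.2 ⟨k, i, hk, rfl⟩)
    positivity
  have key : ∀ j ∈ Finset.univ.erase i,
      ‖G i j‖ < (G i i).re * (G j j).re := by
    intro j hj
    have hij : i ≠ j := (Finset.ne_of_mem_erase hj).symm
    have hprod : 0 < (G i i).re * (G j j).re :=
      mul_pos (hpos i) (hpos j)
    have hs : 0 < Real.sqrt ((G i i).re * (G j j).re) := Real.sqrt_pos.mpr hprod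
    have hle : ‖G i j‖ / Real.sqrt ((G i i).re * (G j j).re) ≤ μ :=
      hμ.2 ⟨i, j, hij, rfl⟩
    have h1 : ‖G i j‖ ≤ μ * Real.sqrt ((G i i).re * (G j j).re) := by
      rw [div_le_iff₀ hs] at hle; linarith
    have hμs : μ < Real.sqrt ((G i i).re * (G j j).re) := by
      rw [Real.lt_sqrt hμ0]
      nlinarith [hdom i, hdom j, hpos i, hpos j]
    have h2 : μ * Real.sqrt ((G i i).re * (G j j).re) <
        (G i i).re * (G j j).re := by
      have := Real.sq_sqrt hprod.le
      nlinarith [hs]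
    linarith
  have hne : (Finset.univ.erase i).Nonempty :=
    ⟨k, Finset.mem_erase.mpr ⟨hk, Finset.mem_univ k⟩⟩
  have hsum : ∑ j ∈ Finset.univ.erase i, ‖G i j‖ <
      ∑ j ∈ Finset.univ.erase i, (G i i).re * (G j j).re :=
    Finset.sum_lt_sum_of_nonempty hne key
  have hrest : ∑ j ∈ Finset.univ.erase i, (G j j).re = 1 - (G i i).re := by
    rw [Finset.sum_erase_eq_sub (Finset.mem_univ i), htrace]
  have : ∑ j ∈ Finset.univ.erase i, (G i i).re * (G j j).re
      = (G i i).re * (1 - (G i i).re) := by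
    rw [← Finset.mul_sum, hrest]
  nlinarith [hpos i]
end

section
/- (Shortest-path concatenation inequality.) Let g be a directed graph with a distinguished set M of 'middle' nodes, and suppose every path from a node a to a node a' factors through M as a concatenation α ∘ β' where α goes from a to some z ∈ M and β goes from (the original node corresponding to) a' to z. Let d(a,a'), d(b,b'), d(a,b') denote the lengths of shortest such concatenated paths (assumed to exist). Then (d(a,a') + d(b,b'))/2 ≤ d(a,b'). -/
open Finset

/-- Shortest-path concatenation inequality in a concatenated gammoid `Γ ∘ Γ'`:
if `L x z` denotes the set of lengths of paths from `x` to the middle node `z`, and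
the shortest concatenated-path distances `d(a,a')`, `d(b,b')`, `d(a,b')` exist (each
being the least value of `p + q` over middle nodes `z` and path lengths `p`, `q` into
`z`), then `(d(a,a') + d(b,b')) / 2 ≤ d(a,b')`. -/
theorem shortest_path_concat_inequality {V : Type*} (Mid : Set V)
    (L : V → V → Set ℕ) (a b : V) (daa dbb dab : ℕ)
    (hdaa : IsLeast {n : ℕ | ∃ z ∈ Mid, ∃ p ∈ L a z, ∃ q ∈ L a z, n = p + q} daa)
    (hdbb : IsLeast {n : ℕ | ∃ z ∈ Mid, ∃ p ∈ L b z, ∃ q ∈ L b z, n = p + q} dbb)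
    (hdab : IsLeast {n : ℕ | ∃ z ∈ Mid, ∃ p ∈ L a z, ∃ q ∈ L b z, n = p + q} dab) :
    ((daa : ℝ) + dbb) / 2 ≤ dab := by
  obtain ⟨⟨z, hz, p, hp, q, hq, hpq⟩, _⟩ := hdab
  have h1 : daa ≤ p + p := hdaa.2 ⟨z, hz, p, hp, p, hp, rfl⟩
  have h2 : dbb ≤ q + q := hdbb.2 ⟨z, hz, q, hq, q, hq, rfl⟩
  have : daa + dbb ≤ 2 * dab := by omega
  have := (Nat.cast_le (α := ℝ)).2 this
  push_cast at this
  linarith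
end

section
/- (ℓ2 error bound for ℓ1-minimizers.) Under the setting of the previous statement, with additionally Λ := Λ_0 ∪ Λ_1 where Λ_1 corresponds to the k largest components of w restricted to Λ_0^c, the error satisfies ‖w‖_2 ≤ 2‖w_Λ‖_2 + 2·σ_k(v)_1/√k. -/
open Finset

private lemma sqrt_add_le' {x y : ℝ} (hx : 0 ≤ x) (hy : 0 ≤ y) :
    Real.sqrt (x + y) ≤ Real.sqrt x + Real.sqrt y := by
  have h : x + y ≤ (Real.sqrt x + Real.sqrt y) ^ 2 := by
    have hxs := Real.sq_sqrt hx
    have hys := Real.sq_sqrt hy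
    nlinarith [Real.sqrt_nonneg x, Real.sqrt_nonneg y]
  calc Real.sqrt (x + y) ≤ Real.sqrt ((Real.sqrt x + Real.sqrt y) ^ 2) :=
        Real.sqrt_le_sqrt h
    _ = Real.sqrt x + Real.sqrt y := Real.sqrt_sq (by positivity)

set_option maxHeartbeats 1000000 in
/-- ℓ² error bound for ℓ¹-minimizers: with `‖u‖₁ ≤ ‖v‖₁`, `w = u − v`, `Λ₀` indexing
the `k` largest component norms of `v`, `Λ₁ ⊆ Λ₀ᶜ` indexing the `k` largest component
norms of `w` on `Λ₀ᶜ`, and `Λ = Λ₀ ∪ Λ₁`, one has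
`‖w‖₂ ≤ 2 ‖w_Λ‖₂ + 2 σ_k(v)₁ / √k`, where `σ_k(v)₁ = ∑_{i ∉ Λ₀} ‖v i‖`. -/
theorem l2_error_bound_l1_minimizer {N : ℕ} {E : Fin N → Type*}
    [∀ i, NormedAddCommGroup (E i)] (u v : ∀ i, E i)
    (h1 : ∑ i, ‖u i‖ ≤ ∑ i, ‖v i‖) (k : ℕ) (hk : 0 < k)
    (Λ₀ : Finset (Fin N)) (hcard0 : Λ₀.card = k)
    (hmax0 : ∀ i ∈ Λ₀, ∀ j ∉ Λ₀, ‖v j‖ ≤ ‖v i‖)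
    (Λ₁ : Finset (Fin N)) (hsub : Λ₁ ⊆ Λ₀ᶜ)
    (hcard1 : Λ₁.card = min k Λ₀ᶜ.card)
    (hmax1 : ∀ i ∈ Λ₁, ∀ j ∈ Λ₀ᶜ \ Λ₁, ‖u j - v j‖ ≤ ‖u i - v i‖) :
    Real.sqrt (∑ i, ‖u i - v i‖ ^ 2)
      ≤ 2 * Real.sqrt (∑ i ∈ Λ₀ ∪ Λ₁, ‖u i - v i‖ ^ 2)
        + 2 * (∑ i ∈ Λ₀ᶜ, ‖v i‖) / Real.sqrt k := by
  set w : ∀ i, E i := fun i => u i - v i with hw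
  have hσ : (0:ℝ) ≤ ∑ i ∈ Λ₀ᶜ, ‖v i‖ := Finset.sum_nonneg fun i _ => norm_nonneg _
  have hsk : (0:ℝ) < Real.sqrt k := Real.sqrt_pos.2 (by exact_mod_cast hk)
  have hAnn : (0:ℝ) ≤ ∑ i ∈ Λ₀ ∪ Λ₁, ‖w i‖ ^ 2 :=
    Finset.sum_nonneg fun i _ => sq_nonneg _
  -- split the total sum
  have hsplit : ∑ i, ‖w i‖ ^ 2
      = ∑ i ∈ Λ₀ ∪ Λ₁, ‖w i‖ ^ 2 + ∑ i ∈ (Λ₀ ∪ Λ₁)ᶜ, ‖w i‖ ^ 2 :=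
    (Finset.sum_add_sum_compl _ _).symm
  have hcompl : (Λ₀ ∪ Λ₁)ᶜ = Λ₀ᶜ \ Λ₁ := by
    ext i; simp [Finset.mem_sdiff, and_comm]
  rcases lt_or_ge Λ₀ᶜ.card k with hlt | hge
  · -- Λ₁ = Λ₀ᶜ, so Λ₀ ∪ Λ₁ = univ
    have hΛ₁ : Λ₁ = Λ₀ᶜ := Finset.eq_of_subset_of_card_le hsub
      (by rw [hcard1]; exact le_of_eq (min_eq_right hlt.le).symm)
    have huniv : Λ₀ ∪ Λ₁ = Finset.univ := by
      rw [hΛ₁, Finset.union_compl]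
    rw [← huniv]
    have h2 : Real.sqrt (∑ i ∈ Λ₀ ∪ Λ₁, ‖w i‖ ^ 2)
        ≤ 2 * Real.sqrt (∑ i ∈ Λ₀ ∪ Λ₁, ‖w i‖ ^ 2) := by
      nlinarith [Real.sqrt_nonneg (∑ i ∈ Λ₀ ∪ Λ₁, ‖w i‖ ^ 2)]
    have h3 : (0:ℝ) ≤ 2 * (∑ i ∈ Λ₀ᶜ, ‖v i‖) / Real.sqrt k := by positivity
    linarith
  · -- main case : Λ₁.card = k
    have hc1 : Λ₁.card = k := by rw [hcard1]; exact min_eq_left hge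
    have hne : Λ₁.Nonempty := Finset.card_pos.1 (by omega)
    obtain ⟨j₀, hj₀, hmin⟩ := Λ₁.exists_min_image (fun j => ‖w j‖) hne
    set M : ℝ := ‖w j₀‖ with hM
    have hM0 : 0 ≤ M := norm_nonneg _
    set S : ℝ := ∑ i ∈ Λ₀ᶜ \ Λ₁, ‖w i‖ with hS
    set P : ℝ := ∑ i ∈ Λ₁, ‖w i‖ with hP
    have hS0 : 0 ≤ S := Finset.sum_nonneg fun i _ => norm_nonneg _
    have hP0 : 0 ≤ P := Finset.sum_nonneg fun i _ => norm_nonneg _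
    -- tail ℓ² bounded by M * S
    have hB2 : ∑ i ∈ Λ₀ᶜ \ Λ₁, ‖w i‖ ^ 2 ≤ M * S := by
      rw [hS, Finset.mul_sum]
      refine Finset.sum_le_sum fun i hi => ?_
      have h := hmax1 j₀ hj₀ i hi
      have h0 : 0 ≤ ‖w i‖ := norm_nonneg _
      nlinarith
    have hB20 : 0 ≤ ∑ i ∈ Λ₀ᶜ \ Λ₁, ‖w i‖ ^ 2 :=
      Finset.sum_nonneg fun i _ => sq_nonneg _
    -- k * M ≤ P
    have hkM : (k:ℝ) * M ≤ P := by
      have := Finset.card_nsmul_le_sum Λ₁ (fun j => ‖w j‖) M (fun j hj => hmin j hj)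
      rw [hc1] at this
      simpa [nsmul_eq_mul] using this
    -- S + P = ∑_{Λ₀ᶜ} ‖w‖
    have hSP : S + P = ∑ i ∈ Λ₀ᶜ, ‖w i‖ := Finset.sum_sdiff hsub
    -- tail ℓ¹ bound from ℓ¹-minimality
    have hT : ∑ i ∈ Λ₀ᶜ, ‖w i‖ ≤ ∑ i ∈ Λ₀, ‖w i‖ + 2 * ∑ i ∈ Λ₀ᶜ, ‖v i‖ := by
      have hu : ∑ i, ‖u i‖ = ∑ i ∈ Λ₀, ‖u i‖ + ∑ i ∈ Λ₀ᶜ, ‖u i‖ :=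
        (Finset.sum_add_sum_compl _ _).symm
      have hv : ∑ i, ‖v i‖ = ∑ i ∈ Λ₀, ‖v i‖ + ∑ i ∈ Λ₀ᶜ, ‖v i‖ :=
        (Finset.sum_add_sum_compl _ _).symm
      have hlow0 : ∑ i ∈ Λ₀, ‖v i‖ - ∑ i ∈ Λ₀, ‖w i‖ ≤ ∑ i ∈ Λ₀, ‖u i‖ := by
        rw [← Finset.sum_sub_distrib]
        refine Finset.sum_le_sum fun i _ => ?_
        have := norm_sub_norm_le (v i) (u i)
        have h2 : ‖v i - u i‖ = ‖w i‖ := by rw [hw]; simp [norm_sub_rev]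
        linarith
      have hlowc : ∑ i ∈ Λ₀ᶜ, ‖w i‖ - ∑ i ∈ Λ₀ᶜ, ‖v i‖ ≤ ∑ i ∈ Λ₀ᶜ, ‖u i‖ := by
        rw [← Finset.sum_sub_distrib]
        refine Finset.sum_le_sum fun i _ => ?_
        have := norm_sub_norm_le (u i - v i) (- v i)
        simp only [hw, sub_neg_eq_add, sub_add_cancel, norm_neg] at this
        simpa using this
      rw [hu, hv] at h1
      linarith
    -- Cauchy–Schwarz on Λ₀
    have hCS : ∑ i ∈ Λ₀, ‖w i‖ ≤ Real.sqrt k * Real.sqrt (∑ i ∈ Λ₀, ‖w i‖ ^ 2) := by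
      have h := sq_sum_le_card_mul_sum_sq (s := Λ₀) (f := fun i => ‖w i‖)
      rw [hcard0] at h
      have h0 : 0 ≤ ∑ i ∈ Λ₀, ‖w i‖ := Finset.sum_nonneg fun i _ => norm_nonneg _
      have := Real.sqrt_le_sqrt h
      rw [Real.sqrt_sq h0, Real.sqrt_mul (by positivity)] at this
      exact this
    set A₀ : ℝ := Real.sqrt (∑ i ∈ Λ₀, ‖w i‖ ^ 2) with hA₀
    set σ : ℝ := ∑ i ∈ Λ₀ᶜ, ‖v i‖ with hσdef
    have hA₀0 : 0 ≤ A₀ := Real.sqrt_nonneg _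
    -- B2 ≤ (S+P)^2/(4k), and S+P ≤ √k A₀ + 2σ
    have hTbound : S + P ≤ Real.sqrt k * A₀ + 2 * σ := by
      rw [hSP]; linarith
    have hB2' : ∑ i ∈ Λ₀ᶜ \ Λ₁, ‖w i‖ ^ 2 ≤ (Real.sqrt k * A₀ + 2 * σ) ^ 2 / (4 * k) := by
      have hk' : (0:ℝ) < k := by exact_mod_cast hk
      have h4 : (k:ℝ) * (M * S) ≤ P * S := by nlinarith
      have h5 : P * S ≤ ((S + P) / 2) ^ 2 := by nlinarith [sq_nonneg (S - P)]
      have h6 : ((S + P) / 2) ^ 2 ≤ ((Real.sqrt k * A₀ + 2 * σ) / 2) ^ 2 :=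
        pow_le_pow_left₀ (by linarith) (by linarith) 2
      have h7 : (k:ℝ) * (∑ i ∈ Λ₀ᶜ \ Λ₁, ‖w i‖ ^ 2) ≤ (k:ℝ) * (M * S) :=
        mul_le_mul_of_nonneg_left hB2 hk'.le
      have h8 : ((Real.sqrt k * A₀ + 2 * σ) / 2) ^ 2
          = (Real.sqrt k * A₀ + 2 * σ) ^ 2 / 4 := by ring
      rw [le_div_iff₀ (by positivity : (0:ℝ) < 4 * k)]
      linarith
    -- hence sqrt of tail ≤ A₀/2 + σ/√k
    have hsqrtB : Real.sqrt (∑ i ∈ Λ₀ᶜ \ Λ₁, ‖w i‖ ^ 2)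
        ≤ A₀ / 2 + σ / Real.sqrt k := by
      have hrhs : A₀ / 2 + σ / Real.sqrt k
          = (Real.sqrt k * A₀ + 2 * σ) / (2 * Real.sqrt k) := by
        field_simp
      have h2k : ((2:ℝ) * Real.sqrt k) ^ 2 = 4 * k := by
        rw [mul_pow, Real.sq_sqrt (by positivity : (0:ℝ) ≤ (k:ℝ))]
        norm_num
      have heq : (Real.sqrt k * A₀ + 2 * σ) ^ 2 / (4 * k)
          = ((Real.sqrt k * A₀ + 2 * σ) / (2 * Real.sqrt k)) ^ 2 := by
        rw [div_pow, h2k]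
      calc Real.sqrt (∑ i ∈ Λ₀ᶜ \ Λ₁, ‖w i‖ ^ 2)
          ≤ Real.sqrt (((Real.sqrt k * A₀ + 2 * σ) / (2 * Real.sqrt k)) ^ 2) := by
            rw [← heq]; exact Real.sqrt_le_sqrt hB2'
        _ = (Real.sqrt k * A₀ + 2 * σ) / (2 * Real.sqrt k) := by
            rw [Real.sqrt_sq (by positivity)]
        _ = A₀ / 2 + σ / Real.sqrt k := hrhs.symm
    -- A₀ ≤ A (norm on Λ)
    have hA0A : A₀ ≤ Real.sqrt (∑ i ∈ Λ₀ ∪ Λ₁, ‖w i‖ ^ 2) := by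
      apply Real.sqrt_le_sqrt
      exact Finset.sum_le_sum_of_subset_of_nonneg Finset.subset_union_left
        (fun i _ _ => sq_nonneg _)
    -- conclude
    set A : ℝ := Real.sqrt (∑ i ∈ Λ₀ ∪ Λ₁, ‖w i‖ ^ 2) with hA
    have hA0 : 0 ≤ A := Real.sqrt_nonneg _
    calc Real.sqrt (∑ i, ‖w i‖ ^ 2)
        = Real.sqrt (∑ i ∈ Λ₀ ∪ Λ₁, ‖w i‖ ^ 2 + ∑ i ∈ (Λ₀ ∪ Λ₁)ᶜ, ‖w i‖ ^ 2) := by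
          rw [← hsplit]
      _ ≤ A + Real.sqrt (∑ i ∈ (Λ₀ ∪ Λ₁)ᶜ, ‖w i‖ ^ 2) :=
          sqrt_add_le' hAnn (Finset.sum_nonneg fun i _ => sq_nonneg _)
      _ ≤ A + (A₀ / 2 + σ / Real.sqrt k) := by
          rw [hcompl]; linarith
      _ ≤ 2 * A + 2 * σ / Real.sqrt k := by
          have : A₀ ≤ A := hA0A
          have hσk : 0 ≤ σ / Real.sqrt k := by positivity
          have : σ / Real.sqrt k ≤ 2 * σ / Real.sqrt k := by
            rw [div_le_div_iff₀ hsk hsk]; nlinarith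
          linarith
end
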